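/- Let n ≥ 1 and let X_1,…,X_n be mutually independent real random variables such that each X_i has finite moments of all orders, mean μ_i, variance σ_i², and satisfies Bernstein's condition with parameter β_i > 0, i.e., |E[(X_i − μ_i)^k]| ≤ (1/2)·k!·σ_i²·β_i^{k−2} for every integer k ≥ 2. Let δ_1,…,δ_n ∈ ℝ and set X = δ_1 X_1 + ⋯ + δ_n X_n, μ = δ_1 μ_1 + ⋯ + δ_n μ_n, σ² = δ_1² σ_1² + ⋯ + δ_n² σ_n², and β = √n · max{ |δ_1|β_1, …, |δ_n|β_n, |δ_1|σ_1, …, |δ_n|σ_n }. Then E[X] = μ, Var(X) = σ², and X satisfies Bernstein's condition with parameter β: |E[(X − μ)^k]| ≤ (1/2)·k!·σ²·β^{k−2} for every integer k ≥ 2. -/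

import Mathlib

open MeasureTheory ProbabilityTheory Finset

lemma num1 (x : ℝ) (hx : 1 ≤ x) (m : ℕ) :
    x ^ (2*m) + m * x ^ (2*m - 2) ≤ (x ^ 2 + 1) ^ m := by
  have hx0 : (0:ℝ) ≤ x := le_trans zero_le_one hx
  induction m with
  | zero => simp
  | succ m ih =>
      have h1 : (1:ℝ) ≤ x ^ 2 + 1 := by nlinarith
      have key : (x ^ (2*m) + m * x ^ (2*m-2)) * (x^2 + 1) ≤ (x^2+1)^(m+1) := by
        rw [pow_succ]
        apply mul_le_mul_of_nonneg_right ih (by nlinarith)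
      refine le_trans ?_ key
      rcases Nat.eq_zero_or_pos m with rfl | hm
      · norm_num
      · have e1 : 2*(m+1) - 2 = 2*m := by omega
        have e2 : 2*m - 2 + 2 = 2*m := by omega
        have e3 : x ^ (2*(m+1)) = x ^ (2*m) * x^2 := by rw [← pow_add]; ring_nf
        have e4 : x ^ (2*m) = x ^ (2*m-2) * x^2 := by rw [← pow_add, e2]
        have h5 : (0:ℝ) ≤ x ^ (2*m-2) := pow_nonneg hx0 _
        rw [e1, e3, e4]
        push_cast
        nlinarith [mul_nonneg (Nat.cast_nonneg (α := ℝ) m) h5, sq_nonneg x]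

lemma num2 (x y : ℝ) (hx : 1 ≤ x) (hy : x ≤ y) (hxy : y ^ 2 = x ^ 2 + 1)
    (k : ℕ) (hk : 2 ≤ k) :
    x ^ (k-2) + 1/2 * ∑ j ∈ Finset.Ico 2 (k-1), x ^ (k-2-j) ≤ y ^ (k-2) := by
  have hx0 : (0:ℝ) ≤ x := le_trans zero_le_one hx
  have hy0 : (0:ℝ) ≤ y := le_trans hx0 hy
  have hsum : ∑ j ∈ Finset.Ico 2 (k-1), x ^ (k-2-j) ≤ (k-3 : ℕ) * x ^ (k-4) := by
    calc ∑ j ∈ Finset.Ico 2 (k-1), x ^ (k-2-j)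
        ≤ ∑ j ∈ Finset.Ico 2 (k-1), x ^ (k-4) := by
          apply Finset.sum_le_sum
          intro j hj
          simp only [Finset.mem_Ico] at hj
          exact pow_le_pow_right₀ hx (by omega)
      _ = (k-3 : ℕ) * x ^ (k-4) := by
          rw [Finset.sum_const, Nat.card_Ico, nsmul_eq_mul]
          have : k-1-2 = k-3 := by omega
          rw [this]
  have hxk : (0:ℝ) ≤ x ^ (k-4) := pow_nonneg hx0 _
  have key : x ^ (k-2) + ((k-3:ℕ):ℝ)/2 * x ^ (k-4) ≤ y ^ (k-2) := by
    rcases Nat.lt_or_ge k 4 with h4 | h4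
    · interval_cases k
      · norm_num
      · norm_num
        exact hy
    · rcases Nat.even_or_odd (k-2) with ⟨q, hq⟩ | ⟨q, hq⟩
      · have hq1 : 1 ≤ q := by omega
        have h1 := num1 x hx q
        have e1 : k - 2 = 2*q := by omega
        have e2 : k - 4 = 2*q - 2 := by omega
        have e3 : y ^ (k-2) = (x^2+1) ^ q := by
          rw [e1, pow_mul, hxy]
        have hc : ((k-3:ℕ):ℝ)/2 ≤ (q:ℝ) := by
          have h := (Nat.cast_le (α := ℝ)).mpr (show (k-3:ℕ) ≤ 2*q by omega)
          push_cast at h ⊢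
          linarith
        rw [e3, e1, e2]
        nlinarith [pow_nonneg hx0 (2*q-2)]
      · have hq1 : 1 ≤ q := by omega
        have h1 := num1 x hx q
        have e1 : k - 2 = 2*q + 1 := by omega
        have e2 : k - 4 = 2*q - 1 := by omega
        have e3 : y ^ (k-2) = (x^2+1) ^ q * y := by
          rw [e1, pow_succ, pow_mul, hxy]
        have hc : ((k-3:ℕ):ℝ)/2 ≤ (q:ℝ) := by
          have h := (Nat.cast_le (α := ℝ)).mpr (show (k-3:ℕ) ≤ 2*q by omega)
          push_cast at h ⊢
          linarith
        have e4 : x ^ (k-2) = x ^ (2*q) * x := by rw [e1, pow_succ]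
        have e5 : x ^ (k-4) = x ^ (2*q-2) * x := by
          rw [e2, ← pow_succ]
          congr 1
          omega
        have hstep : (x ^ (2*q) + q * x ^ (2*q-2)) * x ≤ (x^2+1)^q * y := by
          calc (x ^ (2*q) + q * x ^ (2*q-2)) * x ≤ (x^2+1)^q * x :=
                mul_le_mul_of_nonneg_right h1 hx0
            _ ≤ (x^2+1)^q * y := by
                apply mul_le_mul_of_nonneg_left hy
                positivity
        rw [e3, e4, e5]
        nlinarith [hstep, hc, mul_nonneg (pow_nonneg hx0 (2*q-2)) hx0]
  calc x ^ (k-2) + 1/2 * ∑ j ∈ Finset.Ico 2 (k-1), x ^ (k-2-j)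
      ≤ x ^ (k-2) + ((k-3:ℕ):ℝ)/2 * x ^ (k-4) := by linarith
    _ ≤ y ^ (k-2) := key


lemma iIndepFun_ae_eq {Ω : Type*} [MeasurableSpace Ω] {P : Measure Ω}
    {ι : Type*} [Countable ι] {X X' : ι → Ω → ℝ}
    (h : iIndepFun X P)
    (heq : ∀ i, X i =ᵐ[P] X' i) :
    iIndepFun X' P := by
  rw [iIndepFun_iff_measure_inter_preimage_eq_mul] at h ⊢
  intro S sets hsets
  have hpre : ∀ i, (X i ⁻¹' sets i : Set Ω) =ᵐ[P] (X' i ⁻¹' sets i : Set Ω) := by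
    intro i
    filter_upwards [heq i] with ω hω
    show (X i ω ∈ sets i) = (X' i ω ∈ sets i)
    rw [hω]
  have hInter : (⋂ i ∈ S, X i ⁻¹' sets i : Set Ω) =ᵐ[P] (⋂ i ∈ S, X' i ⁻¹' sets i : Set Ω) := by
    have h2 : ∀ i : ι, (⋂ (_ : i ∈ S), X i ⁻¹' sets i : Set Ω)
        =ᵐ[P] (⋂ (_ : i ∈ S), X' i ⁻¹' sets i : Set Ω) := by
      intro i
      by_cases hi : i ∈ S
      · simpa [hi] using hpre i
      · simp [hi]
    exact EventuallyEq.countable_iInter h2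
  rw [← measure_congr hInter, h S hsets]
  exact Finset.prod_congr rfl fun i _ => measure_congr (hpre i)

lemma integrable_pow_of_memℒp {Ω : Type*} [MeasurableSpace Ω] {P : Measure Ω}
    [IsProbabilityMeasure P] {f : Ω → ℝ} (hf : ∀ p : ℕ, MemLp f p P) (m : ℕ) :
    Integrable (fun ω => f ω ^ m) P := by
  rcases Nat.eq_zero_or_pos m with rfl | hm
  · simp only [pow_zero]
    exact integrable_const 1
  · have h := (hf m).integrable_norm_rpow (by exact_mod_cast hm.ne') (by simp)
    have heq : (fun ω => ‖f ω‖ ^ ((m : ENNReal)).toReal) = fun ω => ‖f ω ^ m‖ := by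
      funext ω
      rw [ENNReal.toReal_natCast, Real.rpow_natCast, Real.norm_eq_abs, Real.norm_eq_abs, abs_pow]
    rw [heq] at h
    have haesm : AEStronglyMeasurable (fun ω => f ω ^ m) P :=
      (hf 1).aestronglyMeasurable.pow m
    exact (integrable_norm_iff haesm).mp h




lemma moment_sum_bound
    {Ω : Type*} [MeasurableSpace Ω] {P : Measure Ω} [IsProbabilityMeasure P]
    {n : ℕ} {Y : Fin n → Ω → ℝ} {c : Fin n → ℝ} {M : ℝ}
    (hM : 0 ≤ M)
    (hmeas : ∀ i, Measurable (Y i))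
    (hindep : iIndepFun Y P)
    (hmom : ∀ i, ∀ p : ℕ, MemLp (Y i) p P)
    (hc : ∀ i, 0 ≤ c i) (hcM : ∀ i, c i ≤ M ^ 2)
    (hmean : ∀ i, ∫ ω, Y i ω ∂P = 0)
    (hbern : ∀ i, ∀ j : ℕ, 2 ≤ j →
      |∫ ω, (Y i ω) ^ j ∂P| ≤ 1/2 * (j.factorial : ℝ) * c i * M ^ (j-2)) :
    ∀ (s : Finset (Fin n)) (k : ℕ), 2 ≤ k →
    |∫ ω, (∑ i ∈ s, Y i ω) ^ k ∂P|
      ≤ 1/2 * (k.factorial : ℝ) * (∑ i ∈ s, c i) * Real.sqrt s.card ^ (k-2) * M ^ (k-2) := by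
  intro s
  induction s using Finset.induction_on with
  | empty =>
      intro k hk
      simp [zero_pow (show k ≠ 0 by omega)]
  | @insert a s ha ih =>
      intro k hk
      classical
      set A : Ω → ℝ := fun ω => ∑ i ∈ s, Y i ω with hA
      set Z : Ω → ℝ := fun ω => Y a ω with hZ
      have hmomA : ∀ p : ℕ, MemLp A p P := fun p => by
        have h1 := memLp_finset_sum' s (fun i (_ : i ∈ s) => hmom i p)
        have : (∑ i ∈ s, Y i) = A := by funext ω; simp [hA]
        rwa [this] at h1
      have hintA : ∀ m : ℕ, Integrable (fun ω => A ω ^ m) P :=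
        integrable_pow_of_memℒp hmomA
      have hintZ : ∀ m : ℕ, Integrable (fun ω => Z ω ^ m) P :=
        integrable_pow_of_memℒp (fun p => hmom a p)
      have hAZ : IndepFun A Z P := by
        have h1 := hindep.indepFun_finsetSum_of_notMem hmeas ha
        have hAe : (∑ j ∈ s, Y j) = A := by funext ω; simp [hA]
        rwa [hAe] at h1
      have hpow : ∀ p q : ℕ, IndepFun (fun ω => Z ω ^ p) (fun ω => A ω ^ q) P := fun p q =>
        hAZ.symm.comp (measurable_id.pow_const p) (measurable_id.pow_const q)
      set EA : ℕ → ℝ := fun r => ∫ ω, A ω ^ r ∂P with hEA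
      set EZ : ℕ → ℝ := fun j => ∫ ω, Z ω ^ j ∂P with hEZ
      have hEA0 : EA 0 = 1 := by simp [hEA]
      have hEZ0 : EZ 0 = 1 := by simp [hEZ]
      have hEA1 : EA 1 = 0 := by
        simp only [hEA, pow_one, hA]
        rw [integral_finset_sum s (fun i _ => by
          simpa using integrable_pow_of_memℒp (fun p => hmom i p) 1)]
        simp [hmean]
      have hEZ1 : EZ 1 = 0 := by
        simp only [hEZ, pow_one, hZ]
        exact hmean a
      have hEAbound : ∀ r : ℕ, 2 ≤ r →
          |EA r| ≤ 1/2 * (r.factorial : ℝ) * (∑ i ∈ s, c i) *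
            Real.sqrt s.card ^ (r-2) * M ^ (r-2) := fun r hr => ih r hr
      have hEZbound : ∀ j : ℕ, 2 ≤ j →
          |EZ j| ≤ 1/2 * (j.factorial : ℝ) * c a * M ^ (j-2) := fun j hj => hbern a j hj
      -- expansion
      have expand : ∫ ω, (∑ i ∈ insert a s, Y i ω) ^ k ∂P
          = ∑ j ∈ range (k+1), EZ j * EA (k-j) * (k.choose j : ℝ) := by
        have e1 : ∀ ω, (∑ i ∈ insert a s, Y i ω) ^ k
            = ∑ j ∈ range (k+1), Z ω ^ j * A ω ^ (k-j) * (k.choose j : ℝ) := by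
          intro ω
          rw [Finset.sum_insert ha]
          exact_mod_cast add_pow (Z ω) (A ω) k
        have hint : ∀ j ∈ range (k+1),
            Integrable (fun ω => Z ω ^ j * A ω ^ (k-j) * (k.choose j : ℝ)) P := by
          intro j _
          exact ((hpow j (k-j)).integrable_mul (hintZ j) (hintA (k-j))).mul_const _
        calc ∫ ω, (∑ i ∈ insert a s, Y i ω) ^ k ∂P
            = ∫ ω, ∑ j ∈ range (k+1), Z ω ^ j * A ω ^ (k-j) * (k.choose j : ℝ) ∂P := by
              exact integral_congr_ae (Filter.Eventually.of_forall e1)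
          _ = ∑ j ∈ range (k+1), ∫ ω, Z ω ^ j * A ω ^ (k-j) * (k.choose j : ℝ) ∂P :=
              integral_finset_sum _ hint
          _ = ∑ j ∈ range (k+1), EZ j * EA (k-j) * (k.choose j : ℝ) := by
              refine Finset.sum_congr rfl fun j _ => ?_
              rw [integral_mul_const]
              congr 1
              exact (hpow j (k-j)).integral_fun_mul_eq_mul_integral (hintZ j).aestronglyMeasurable
                (hintA (k-j)).aestronglyMeasurable
      rw [expand]
      set N := s.card with hN
      set x := Real.sqrt N with hx
      set y := Real.sqrt ((N:ℝ)+1) with hy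
      set C := ∑ i ∈ s, c i with hC
      have hC0 : 0 ≤ C := Finset.sum_nonneg fun i _ => hc i
      have hx0 : (0:ℝ) ≤ x := Real.sqrt_nonneg _
      have hy1 : (1:ℝ) ≤ y := by
        rw [hy, Real.one_le_sqrt]
        exact le_add_of_nonneg_left (Nat.cast_nonneg _)
      have hMk : (0:ℝ) ≤ M ^ (k-2) := pow_nonneg hM _
      have habs : |∑ j ∈ range (k+1), EZ j * EA (k-j) * (k.choose j:ℝ)|
          ≤ ∑ j ∈ range (k+1), (k.choose j:ℝ) * |EZ j| * |EA (k-j)| := by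
        refine (Finset.abs_sum_le_sum_abs _ _).trans (le_of_eq ?_)
        refine Finset.sum_congr rfl fun j _ => ?_
        rw [abs_mul, abs_mul, Nat.abs_cast]
        ring
      have hmid : ∀ j ∈ Finset.Ico 1 k, (k.choose j:ℝ) * |EZ j| * |EA (k-j)|
          ≤ if j = 1 ∨ j = k-1 then 0
            else 1/4 * (k.factorial:ℝ) * C * M ^ (k-2) * x ^ (k-2-j) := by
        intro j hj
        rw [Finset.mem_Ico] at hj
        by_cases h1 : j = 1 ∨ j = k - 1
        · rw [if_pos h1]
          rcases h1 with rfl | rfl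
          · simp [hEZ1]
          · have e : k - (k-1) = 1 := by omega
            rw [e, hEA1]
            simp
        · rw [if_neg h1]
          push_neg at h1
          have hj2 : 2 ≤ j := by omega
          have hjk2 : j ≤ k - 2 := by omega
          have hk4 : 4 ≤ k := by omega
          have hb1 := hEZbound j hj2
          have hb2 := hEAbound (k-j) (by omega)
          have hch : (k.choose j) * j.factorial * (k-j).factorial = k.factorial :=
            Nat.choose_mul_factorial_mul_factorial (by omega)
          have hM4 : M ^ (j-2) * M ^ (k-j-2) = M ^ (k-4) := by
            rw [← pow_add]; congr 1; omega
          have hcaM : c a * M ^ (k-4) ≤ M ^ (k-2) := by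
            have e : M ^ (k-2) = M ^ 2 * M ^ (k-4) := by rw [← pow_add]; congr 1; omega
            rw [e]
            exact mul_le_mul_of_nonneg_right (hcM a) (pow_nonneg hM _)
          have hxj : (0:ℝ) ≤ x ^ (k-j-2) := pow_nonneg hx0 _
          calc (k.choose j:ℝ) * |EZ j| * |EA (k-j)|
              ≤ (k.choose j:ℝ) * (1/2 * (j.factorial:ℝ) * c a * M ^ (j-2)) *
                (1/2 * ((k-j).factorial:ℝ) * C * x ^ ((k-j)-2) * M ^ ((k-j)-2)) := by
                have h0 : (0:ℝ) ≤ 1/2 * (j.factorial:ℝ) * c a * M ^ (j-2) :=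
                  mul_nonneg (mul_nonneg (mul_nonneg (by norm_num) (Nat.cast_nonneg _))
                    (hc a)) (pow_nonneg hM _)
                exact mul_le_mul (mul_le_mul_of_nonneg_left hb1 (Nat.cast_nonneg _)) hb2
                  (abs_nonneg _) (mul_nonneg (Nat.cast_nonneg _) h0)
            _ = 1/4 * (((k.choose j) * j.factorial * (k-j).factorial : ℕ):ℝ) *
                (c a * (M ^ (j-2) * M ^ (k-j-2))) * C * x ^ (k-j-2) := by
                push_cast
                ring
            _ = 1/4 * (k.factorial:ℝ) * (c a * M ^ (k-4)) * C * x ^ (k-j-2) := by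
                rw [hch, hM4]
            _ ≤ 1/4 * (k.factorial:ℝ) * M ^ (k-2) * C * x ^ (k-j-2) := by
                have h14 : (0:ℝ) ≤ 1/4 * (k.factorial:ℝ) := by positivity
                exact mul_le_mul_of_nonneg_right
                  (mul_le_mul_of_nonneg_right
                    (mul_le_mul_of_nonneg_left hcaM h14) hC0) hxj
            _ = 1/4 * (k.factorial:ℝ) * C * M ^ (k-2) * x ^ (k-2-j) := by
                rw [show k-j-2 = k-2-j from by omega]
                ring
      have hmidsum : ∑ j ∈ Finset.Ico 1 k, (k.choose j:ℝ) * |EZ j| * |EA (k-j)|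
          ≤ 1/4 * (k.factorial:ℝ) * C * M ^ (k-2) *
            ∑ j ∈ Finset.Ico 2 (k-1), x ^ (k-2-j) := by
        have hsub : Finset.Ico 2 (k-1) ⊆ Finset.Ico 1 k := by
          intro j hj
          rw [Finset.mem_Ico] at hj ⊢
          omega
        calc ∑ j ∈ Finset.Ico 1 k, (k.choose j:ℝ) * |EZ j| * |EA (k-j)|
            ≤ ∑ j ∈ Finset.Ico 1 k, (if j = 1 ∨ j = k-1 then 0
                else 1/4 * (k.factorial:ℝ) * C * M ^ (k-2) * x ^ (k-2-j)) :=
              Finset.sum_le_sum hmid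
          _ = ∑ j ∈ Finset.Ico 2 (k-1), (if j = 1 ∨ j = k-1 then 0
                else 1/4 * (k.factorial:ℝ) * C * M ^ (k-2) * x ^ (k-2-j)) := by
              refine (Finset.sum_subset hsub fun j hj hj' => ?_).symm
              rw [Finset.mem_Ico] at hj
              rw [Finset.mem_Ico] at hj'
              rw [if_pos (by omega)]
          _ = ∑ j ∈ Finset.Ico 2 (k-1),
                1/4 * (k.factorial:ℝ) * C * M ^ (k-2) * x ^ (k-2-j) := by
              refine Finset.sum_congr rfl fun j hj => ?_
              rw [Finset.mem_Ico] at hj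
              rw [if_neg (by omega)]
          _ = 1/4 * (k.factorial:ℝ) * C * M ^ (k-2) *
                ∑ j ∈ Finset.Ico 2 (k-1), x ^ (k-2-j) := by
              exact (Finset.mul_sum _ _ _).symm
      have hsplit : ∑ j ∈ range (k+1), (k.choose j:ℝ) * |EZ j| * |EA (k-j)|
          = |EA k| + |EZ k|
            + ∑ j ∈ Finset.Ico 1 k, (k.choose j:ℝ) * |EZ j| * |EA (k-j)| := by
        have hset : range (k+1) = insert 0 (insert k (Finset.Ico 1 k)) := by
          ext j
          simp only [Finset.mem_range, Finset.mem_insert, Finset.mem_Ico]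
          omega
        rw [hset, Finset.sum_insert, Finset.sum_insert]
        · rw [Nat.choose_zero_right, Nat.choose_self, Nat.sub_zero, Nat.sub_self,
            hEZ0, hEA0]
          simp only [Nat.cast_one, abs_one]
          ring
        · simp only [Finset.mem_Ico]
          omega
        · simp only [Finset.mem_insert, Finset.mem_Ico]
          omega
      set S := ∑ j ∈ Finset.Ico 2 (k-1), x ^ (k-2-j) with hS
      have hkey : C * (x ^ (k-2) + 1/2 * S) + c a ≤ (c a + C) * y ^ (k-2) := by
        have hcay : c a ≤ c a * y ^ (k-2) := by
          calc c a = c a * 1 := (mul_one _).symm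
            _ ≤ c a * y ^ (k-2) :=
              mul_le_mul_of_nonneg_left (one_le_pow₀ hy1) (hc a)
        rcases eq_or_lt_of_le hC0 with hCz | hCp
        · rw [← hCz]
          simpa using hcay
        · have hsne : s.Nonempty := by
            rcases Finset.eq_empty_or_nonempty s with rfl | h
            · rw [Finset.sum_empty] at hC
              exact absurd hCp (by rw [hC]; exact lt_irrefl 0)
            · exact h
          have hN1 : 1 ≤ N := by
            rw [hN]
            exact Finset.card_pos.mpr hsne
          have hx1 : (1:ℝ) ≤ x := by
            rw [hx, Real.one_le_sqrt]
            exact_mod_cast hN1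
          have hxy2 : y ^ 2 = x ^ 2 + 1 := by
            rw [hx, hy, Real.sq_sqrt (by positivity), Real.sq_sqrt (by positivity)]
          have hxyle : x ≤ y := by
            rw [hx, hy]
            exact Real.sqrt_le_sqrt (by linarith)
          have h2 := num2 x y hx1 hxyle hxy2 k hk
          nlinarith [mul_le_mul_of_nonneg_left h2 hC0]
      have hcard : (((insert a s).card : ℕ):ℝ) = (N:ℝ) + 1 := by
        rw [Finset.card_insert_of_notMem ha, hN]
        push_cast
        ring
      have hsumc : ∑ i ∈ insert a s, c i = c a + C := by
        rw [Finset.sum_insert ha, hC]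
      have ht : (0:ℝ) ≤ 1/2 * (k.factorial:ℝ) * M ^ (k-2) := by positivity
      calc |∑ j ∈ range (k+1), EZ j * EA (k-j) * (k.choose j:ℝ)|
          ≤ ∑ j ∈ range (k+1), (k.choose j:ℝ) * |EZ j| * |EA (k-j)| := habs
        _ = |EA k| + |EZ k|
            + ∑ j ∈ Finset.Ico 1 k, (k.choose j:ℝ) * |EZ j| * |EA (k-j)| := hsplit
        _ ≤ (1/2 * (k.factorial:ℝ) * C * x ^ (k-2) * M ^ (k-2))
            + (1/2 * (k.factorial:ℝ) * c a * M ^ (k-2))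
            + (1/4 * (k.factorial:ℝ) * C * M ^ (k-2) * S) :=
            add_le_add (add_le_add (hEAbound k hk) (hEZbound k hk)) hmidsum
        _ = (1/2 * (k.factorial:ℝ) * M ^ (k-2)) * (C * (x ^ (k-2) + 1/2 * S) + c a) := by
            ring
        _ ≤ (1/2 * (k.factorial:ℝ) * M ^ (k-2)) * ((c a + C) * y ^ (k-2)) :=
            mul_le_mul_of_nonneg_left hkey ht
        _ = 1/2 * (k.factorial:ℝ) * (∑ i ∈ insert a s, c i) *
              Real.sqrt ((insert a s).card) ^ (k-2) * M ^ (k-2) := by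
            rw [hsumc, hcard, ← hy]
            ring


/-- A linear combination of independent random variables satisfying Bernstein's condition
satisfies Bernstein's condition with parameter
`β = √n · max{|δ_i|β_i, |δ_i|σ_i}`. -/
theorem bernstein_condition_linear_combination
    (Ω : Type*) [MeasurableSpace Ω] (P : Measure Ω) [IsProbabilityMeasure P]
    (n : ℕ) (hn : 1 ≤ n)
    (X : Fin n → Ω → ℝ) (μ σ β : Fin n → ℝ)
    (hβpos : ∀ i, 0 < β i) (hσnn : ∀ i, 0 ≤ σ i)
    (hindep : iIndepFun X P)
    (hmom : ∀ i, ∀ p : ℕ, MemLp (X i) p P)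
    (hmean : ∀ i, ∫ ω, X i ω ∂P = μ i)
    (hvar : ∀ i, variance (X i) P = (σ i) ^ 2)
    (hbern : ∀ i, ∀ k : ℕ, 2 ≤ k →
      |∫ ω, (X i ω - μ i) ^ k ∂P|
        ≤ (1 / 2) * (k.factorial : ℝ) * (σ i) ^ 2 * (β i) ^ (k - 2))
    (δ : Fin n → ℝ) :
    (∫ ω, (∑ i, δ i * X i ω) ∂P = ∑ i, δ i * μ i) ∧
    (variance (fun ω => ∑ i, δ i * X i ω) P = ∑ i, (δ i) ^ 2 * (σ i) ^ 2) ∧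
    (∀ k : ℕ, 2 ≤ k →
      |∫ ω, ((∑ i, δ i * X i ω) - ∑ i, δ i * μ i) ^ k ∂P|
        ≤ (1 / 2) * (k.factorial : ℝ) * (∑ i, (δ i) ^ 2 * (σ i) ^ 2) *
            (Real.sqrt n *
              Finset.univ.sup'
                (@Finset.univ_nonempty (Fin n) _ (Fin.pos_iff_nonempty.mp (by omega)))
                (fun i => max (|δ i| * β i) (|δ i| * σ i))) ^ (k - 2)) := by
  classical
  haveI hnea : Nonempty (Fin n) := Fin.pos_iff_nonempty.mp (by omega)
  have hint1 : ∀ i : Fin n, Integrable (X i) P := fun i => by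
    simpa using integrable_pow_of_memℒp (fun p => hmom i p) 1
  -- Part 1
  have part1 : ∫ ω, (∑ i, δ i * X i ω) ∂P = ∑ i, δ i * μ i := by
    rw [integral_finset_sum _ (fun i _ => (hint1 i).const_mul (δ i))]
    refine Finset.sum_congr rfl fun i _ => ?_
    rw [integral_const_mul, hmean i]
  -- Part 2
  have part2 : variance (fun ω => ∑ i, δ i * X i ω) P = ∑ i, (δ i) ^ 2 * (σ i) ^ 2 := by
    have hrw : (fun ω => ∑ i, δ i * X i ω) = ∑ i : Fin n, (fun ω => δ i * X i ω) := by
      funext ω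
      rw [Finset.sum_apply]
    have hpair : Set.Pairwise ↑(Finset.univ : Finset (Fin n))
        (fun i j => IndepFun (fun ω => δ i * X i ω) (fun ω => δ j * X j ω) P) :=
      fun i _ j _ hij =>
        (hindep.indepFun hij).comp (measurable_const_mul (δ i)) (measurable_const_mul (δ j))
    rw [hrw, IndepFun.variance_sum
      (fun i _ => by simpa using (hmom i 2).const_mul (δ i)) hpair]
    refine Finset.sum_congr rfl fun i _ => ?_
    rw [variance_const_mul, hvar i]
  refine ⟨part1, part2, ?_⟩
  intro k hk
  -- setup
  set M : ℝ := Finset.univ.sup' (Finset.univ_nonempty) (fun i => max (|δ i| * β i) (|δ i| * σ i))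
    with hMdef
  have hβM : ∀ i, |δ i| * β i ≤ M := fun i =>
    le_trans (le_max_left _ _)
      (Finset.le_sup' (fun i => max (|δ i| * β i) (|δ i| * σ i)) (Finset.mem_univ i))
  have hσM : ∀ i, |δ i| * σ i ≤ M := fun i =>
    le_trans (le_max_right _ _)
      (Finset.le_sup' (fun i => max (|δ i| * β i) (|δ i| * σ i)) (Finset.mem_univ i))
  have i0 : Fin n := ⟨0, by omega⟩
  have hM0 : 0 ≤ M :=
    le_trans (mul_nonneg (abs_nonneg _) (hβpos i0).le) (hβM i0)
  -- measurable representatives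
  set X' : Fin n → Ω → ℝ := fun i => ((hmom i 0).aestronglyMeasurable).mk (X i) with hX'def
  have hXmeas : ∀ i, Measurable (X' i) := fun i =>
    ((hmom i 0).aestronglyMeasurable).stronglyMeasurable_mk.measurable
  have heqX : ∀ i, X i =ᵐ[P] X' i := fun i => ((hmom i 0).aestronglyMeasurable).ae_eq_mk
  set Y : Fin n → Ω → ℝ := fun i ω => δ i * (X' i ω - μ i) with hYdef
  set c : Fin n → ℝ := fun i => (δ i) ^ 2 * (σ i) ^ 2 with hcdef
  have hmeasY : ∀ i, Measurable (Y i) := fun i =>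
    ((hXmeas i).sub measurable_const).const_mul (δ i)
  have hindepY : iIndepFun Y P := by
    have h1 := iIndepFun_ae_eq hindep heqX
    exact h1.comp (fun i x => δ i * (x - μ i))
      (fun i => (measurable_id.sub measurable_const).const_mul (δ i))
  have hmomY : ∀ i, ∀ p : ℕ, MemLp (Y i) p P := fun i p =>
    (((hmom i p).ae_eq (heqX i)).sub (memLp_const (μ i))).const_mul (δ i)
  have hcY : ∀ i, 0 ≤ c i := fun i => by positivity
  have hcMY : ∀ i, c i ≤ M ^ 2 := fun i => by
    have h1 : c i = (|δ i| * σ i) ^ 2 := by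
      rw [hcdef]
      rw [mul_pow, sq_abs]
    rw [h1]
    exact pow_le_pow_left₀ (mul_nonneg (abs_nonneg _) (hσnn i)) (hσM i) 2
  have hmeanY : ∀ i, ∫ ω, Y i ω ∂P = 0 := by
    intro i
    have hiX' : Integrable (X' i) P := (hint1 i).congr (heqX i)
    have hX'int : ∫ ω, X' i ω ∂P = μ i := by
      rw [← integral_congr_ae (heqX i), hmean i]
    simp only [hYdef]
    rw [integral_const_mul, integral_sub hiX' (integrable_const _), hX'int, integral_const]
    simp
  have hbernY : ∀ i, ∀ j : ℕ, 2 ≤ j →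
      |∫ ω, (Y i ω) ^ j ∂P| ≤ 1/2 * (j.factorial : ℝ) * c i * M ^ (j-2) := by
    intro i j hj
    have e1 : ∫ ω, (Y i ω) ^ j ∂P = (δ i) ^ j * ∫ ω, (X i ω - μ i) ^ j ∂P := by
      have e2 : ∀ ω, (Y i ω) ^ j = (δ i) ^ j * (X' i ω - μ i) ^ j := by
        intro ω
        rw [hYdef, mul_pow]
      rw [integral_congr_ae (Filter.Eventually.of_forall e2), integral_const_mul]
      congr 1
      refine integral_congr_ae ?_
      filter_upwards [heqX i] with ω hω
      rw [hω]
    rw [e1, abs_mul, abs_pow]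
    have hb := hbern i j hj
    have hd : |δ i| ^ j = (δ i)^2 * |δ i| ^ (j-2) := by
      rw [← sq_abs]
      rw [← pow_add]
      congr 1
      omega
    calc |δ i| ^ j * |∫ ω, (X i ω - μ i) ^ j ∂P|
        ≤ |δ i| ^ j * (1/2 * (j.factorial : ℝ) * (σ i)^2 * (β i) ^ (j-2)) :=
          mul_le_mul_of_nonneg_left hb (pow_nonneg (abs_nonneg _) _)
      _ = 1/2 * (j.factorial : ℝ) * ((δ i)^2 * (σ i)^2) * (|δ i| * β i) ^ (j-2) := by
          rw [hd, mul_pow]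
          ring
      _ ≤ 1/2 * (j.factorial : ℝ) * c i * M ^ (j-2) := by
          rw [hcdef]
          refine mul_le_mul_of_nonneg_left ?_ (by positivity)
          exact pow_le_pow_left₀ (mul_nonneg (abs_nonneg _) (hβpos i).le) (hβM i) _
  -- rewrite the integrand
  have hae : (fun ω => ((∑ i, δ i * X i ω) - ∑ i, δ i * μ i) ^ k)
      =ᵐ[P] (fun ω => (∑ i, Y i ω) ^ k) := by
    filter_upwards [ae_all_iff.mpr heqX] with ω hω
    congr 1
    rw [← Finset.sum_sub_distrib]
    refine Finset.sum_congr rfl fun i _ => ?_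
    rw [hYdef, hω i]
    ring
  rw [integral_congr_ae hae]
  have key := moment_sum_bound hM0 hmeasY hindepY hmomY hcY hcMY hmeanY hbernY
    Finset.univ k hk
  rw [Finset.card_univ, Fintype.card_fin] at key
  calc |∫ ω, (∑ i, Y i ω) ^ k ∂P|
      ≤ 1/2 * (k.factorial : ℝ) * (∑ i, c i) * Real.sqrt n ^ (k-2) * M ^ (k-2) := key
    _ = (1 / 2) * (k.factorial : ℝ) * (∑ i, (δ i) ^ 2 * (σ i) ^ 2) *
          (Real.sqrt n * M) ^ (k - 2) := by
        rw [mul_pow]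
        ring
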